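/- Let k ≥ 1 be an integer and T > 0, and let β : ℝ → ℝ be nondecreasing on (0,T] with β(r) > 0 for all r ∈ (0,T]. Assume that for almost every r ∈ (0,T), whenever β is differentiable at r with derivative β′(r), one has β(r) ≤ (r/(k+1))·β′(r). Then the function r ↦ β(r)/r^{k+1} is nondecreasing on (0,T], i.e. β(a)/a^{k+1} ≤ β(b)/b^{k+1} whenever 0 < a ≤ b ≤ T. -/

import Mathlib

open MeasureTheory

/-- **Integration step in the monotonicity formula (Corollary 4.3 of the paper).**
Let `k ≥ 1`, `T > 0`, and let `β : ℝ → ℝ` be nondecreasing on `(0,T]` with `β(r) > 0` for all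
`r ∈ (0,T]`.  If for almost every `r ∈ (0,T)`, whenever `β` is differentiable at `r` with
derivative `β′(r)`, one has `β(r) ≤ (r/(k+1))·β′(r)`, then `r ↦ β(r)/r^(k+1)` is
nondecreasing on `(0,T]`. -/
theorem monotonicity_formula_integration (k : ℕ) (hk : 1 ≤ k) (T : ℝ) (hT : 0 < T)
    (β : ℝ → ℝ)
    (hmono : MonotoneOn β (Set.Ioc (0:ℝ) T))
    (hpos : ∀ r ∈ Set.Ioc (0:ℝ) T, 0 < β r)
    (hae : ∀ᵐ r ∂volume, r ∈ Set.Ioo (0:ℝ) T → ∀ d : ℝ, HasDerivAt β d r →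
      β r ≤ r / ((k : ℝ) + 1) * d) :
    ∀ a b : ℝ, 0 < a → a ≤ b → b ≤ T → β a / a ^ (k + 1) ≤ β b / b ^ (k + 1) := by
  intro a b ha hab hbT
  rcases eq_or_lt_of_le hab with rfl | hab
  · exact le_rfl
  have hb : 0 < b := ha.trans hab
  have haT : a ≤ T := hab.le.trans hbT
  have hk1 : (0 : ℝ) < (k : ℝ) + 1 := by positivity
  -- clamp to [a,b]
  set c : ℝ → ℝ := fun r => min (max r a) b with hc
  have hcmem : ∀ r, c r ∈ Set.Icc a b := fun r =>
    ⟨le_min (le_max_right r a) hab.le, min_le_right _ _⟩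
  have hcmem' : ∀ r, c r ∈ Set.Ioc (0 : ℝ) T := fun r =>
    ⟨lt_of_lt_of_le ha (hcmem r).1, (hcmem r).2.trans hbT⟩
  have hcmono : Monotone c := fun r s h => min_le_min (max_le_max h le_rfl) le_rfl
  set f : ℝ → ℝ := fun r => β (c r) with hfdef
  have hf : Monotone f := fun r s h => hmono (hcmem' r) (hcmem' s) (hcmono h)
  have hfpos : ∀ r, 0 < f r := fun r => hpos _ (hcmem' r)
  set g : ℝ → ℝ := fun r => Real.log (f r) with hgdef
  have hg : Monotone g := fun r s h => Real.log_le_log (hfpos r) (hf h)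
  have hcid : ∀ r ∈ Set.Icc a b, c r = r := by
    intro r hr
    simp only [hc]
    rw [max_eq_left hr.1, min_eq_left hr.2]
  set μ := hg.stieltjesFunction.measure with hμ
  -- the key a.e. lower bound on the derivative of g
  have key : ∀ᵐ x ∂volume, x ∈ Set.Ioo a b →
      ENNReal.ofReal (((k : ℝ) + 1) / x) ≤ μ.rnDeriv volume x := by
    filter_upwards [hf.ae_hasDerivAt, hg.ae_hasDerivAt, hae] with x hx1 hx2 hx3 hmem
    have hx0 : 0 < x := ha.trans hmem.1
    have heq : β =ᶠ[nhds x] f := by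
      filter_upwards [Ioo_mem_nhds hmem.1 hmem.2] with y hy
      simp only [hfdef, hcid y ⟨hy.1.le, hy.2.le⟩]
    set D1 := (Measure.rnDeriv hf.stieltjesFunction.measure volume x).toReal with hD1
    set D2 := (μ.rnDeriv volume x).toReal with hD2
    have hβd : HasDerivAt β D1 x := hx1.congr_of_eventuallyEq heq
    have hβx : 0 < β x := hpos x ⟨hx0, (hmem.2.trans_le hbT).le⟩
    have hineq : β x ≤ x / ((k : ℝ) + 1) * D1 :=
      hx3 ⟨hx0, hmem.2.trans_le hbT⟩ D1 hβd
    -- chain rule: g = log ∘ f has derivative D1 / f x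
    have hfx : f x = β x := by simp only [hfdef, hcid x ⟨hmem.1.le, hmem.2.le⟩]
    have hgd : HasDerivAt g ((f x)⁻¹ * D1) x := by
      have := (Real.hasDerivAt_log (hfpos x).ne').comp x hx1
      exact (by simpa [one_div] using this : HasDerivAt (Real.log ∘ f) ((f x)⁻¹ * D1) x)
    have hD2eq : D2 = (f x)⁻¹ * D1 := hx2.unique hgd
    have hlow : ((k : ℝ) + 1) / x ≤ D2 := by
      rw [hD2eq, hfx, inv_mul_eq_div, div_le_div_iff₀ hx0 hβx]
      rw [div_mul_eq_mul_div, le_div_iff₀ hk1] at hineq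
      linarith
    calc ENNReal.ofReal (((k : ℝ) + 1) / x)
        ≤ ENNReal.ofReal D2 := ENNReal.ofReal_le_ofReal hlow
      _ ≤ μ.rnDeriv volume x := ENNReal.ofReal_toReal_le
  -- integrate the inequality
  have hint : IntegrableOn (fun x => ((k : ℝ) + 1) / x) (Set.Ioo a b) volume := by
    apply (ContinuousOn.integrableOn_Icc ?_).mono_set Set.Ioo_subset_Icc_self
    exact continuousOn_const.div continuousOn_id fun x hx => (ha.trans_le hx.1).ne'
  have I0 : ENNReal.ofReal (∫ x in Set.Ioo a b, ((k : ℝ) + 1) / x)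
      = ∫⁻ x in Set.Ioo a b, ENNReal.ofReal (((k : ℝ) + 1) / x) := by
    apply ofReal_integral_eq_lintegral_ofReal hint
    filter_upwards [ae_restrict_mem measurableSet_Ioo] with x hx
    have hx0 : 0 < x := ha.trans hx.1
    positivity
  have I1 : ∫⁻ x in Set.Ioo a b, ENNReal.ofReal (((k : ℝ) + 1) / x)
      ≤ ∫⁻ x in Set.Ioo a b, μ.rnDeriv volume x :=
    lintegral_mono_ae ((ae_restrict_iff' measurableSet_Ioo).2 key)
  have I2 : ∫⁻ x in Set.Ioo a b, μ.rnDeriv volume x ≤ μ (Set.Ioo a b) :=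
    Measure.setLIntegral_rnDeriv_le _
  have I3 : μ (Set.Ioo a b) ≤ ENNReal.ofReal (g b - g a) := by
    refine (measure_mono Set.Ioo_subset_Ioc_self).trans ?_
    rw [hμ, StieltjesFunction.measure_Ioc]
    apply ENNReal.ofReal_le_ofReal
    have h1 : hg.stieltjesFunction b ≤ g b := by
      rw [hg.stieltjesFunction_eq]
      have hconst : g (b + 1) = g b := by
        simp only [hgdef, hfdef, hc]
        rw [min_eq_right (le_max_of_le_left (by linarith)),
          min_eq_right (le_max_of_le_left le_rfl)]
      calc Function.rightLim g b ≤ g (b + 1) := hg.rightLim_le (by linarith)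
        _ = g b := hconst
    have h2 : g a ≤ hg.stieltjesFunction a := by
      rw [hg.stieltjesFunction_eq]
      exact hg.le_rightLim le_rfl
    linarith
  -- compute the integral
  have Ival : ∫ x in Set.Ioo a b, ((k : ℝ) + 1) / x
      = ((k : ℝ) + 1) * (Real.log b - Real.log a) := by
    rw [← integral_Ioc_eq_integral_Ioo, ← intervalIntegral.integral_of_le hab.le]
    have : ∀ x : ℝ, ((k : ℝ) + 1) / x = ((k : ℝ) + 1) * x⁻¹ := fun x => div_eq_mul_inv _ _
    simp_rw [this]
    rw [intervalIntegral.integral_const_mul, integral_inv, Real.log_div hb.ne' ha.ne']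
    intro h
    rcases h with h
    exact absurd (Set.mem_uIcc.1 h) (by push_neg; constructor <;> intro h1 <;> linarith)
  have main : ((k : ℝ) + 1) * (Real.log b - Real.log a) ≤ g b - g a := by
    have := (I0 ▸ (I1.trans (I2.trans I3)) : ENNReal.ofReal (∫ x in Set.Ioo a b, ((k : ℝ) + 1) / x) ≤ ENNReal.ofReal (g b - g a))
    rw [Ival] at this
    exact (ENNReal.ofReal_le_ofReal_iff (by linarith [hg (le_of_lt hab : a ≤ b)] : (0:ℝ) ≤ g b - g a)).1 this
  -- conclude
  have hga : g a = Real.log (β a) := by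
    simp only [hgdef, hfdef, hcid a ⟨le_rfl, hab.le⟩]
  have hgb : g b = Real.log (β b) := by
    simp only [hgdef, hfdef, hcid b ⟨hab.le, le_rfl⟩]
  have hβa : 0 < β a := hpos a ⟨ha, haT⟩
  have hβb : 0 < β b := hpos b ⟨hb, hbT⟩
  rw [div_le_div_iff₀ (by positivity) (by positivity)]
  have hlog : Real.log (β a * b ^ (k + 1)) ≤ Real.log (β b * a ^ (k + 1)) := by
    rw [Real.log_mul hβa.ne' (by positivity), Real.log_mul hβb.ne' (by positivity),
      Real.log_pow, Real.log_pow]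
    push_cast
    rw [hga, hgb] at main
    linarith
  exact (Real.log_le_log_iff (by positivity) (by positivity)).1 hlog
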